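/- Let v¹,…,vⁿ be an orthonormal basis of ℝⁿ, d₀, d₁ ∈ ℝⁿ, α₁,…,αₙ > 0, λ ∈ (0,1), and μᵢ ∈ [0,1] with 1 - (1-λ)αᵢ^λ ≤ μᵢ ≤ λαᵢ^(λ-1). With E_λ and d_λ as before, if (E_0 + d₀) ∩ (E_1 + d₁) ∩ ∂(E_λ + d_λ) is nonempty then d₀ = d₁. -/

import Mathlib

open scoped RealInnerProductSpace Pointwise

/-- The geometric mean ellipsoid `E_l` with principal axes `v i` and half-lengths `(α i)^l`. -/
def meanEllipsoid {n : ℕ} (v : Fin n → EuclideanSpace ℝ (Fin n)) (α : Fin n → ℝ) (l : ℝ) :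
    Set (EuclideanSpace ℝ (Fin n)) :=
  {x | ∑ i, ⟪x, v i⟫ ^ 2 / (α i) ^ (2 * l) ≤ 1}

lemma hMlem (α X l μ : ℝ) (hα : 0 < α) (hX : 0 < X) (hl0 : 0 < l) (hl1 : l < 1)
    (h1 : 1 - μ ≤ (1 - l) * X) (h2 : μ * α ≤ l * X) (h3 : 0 ≤ μ) (h4 : μ ≤ 1) :
    (1-μ)^2*l + (μ*α)^2*(1-l) ≤ l*(1-l)*X^2 := by
  nlinarith [mul_nonneg (mul_nonneg hl0.le (by linarith : (0:ℝ) ≤ 1-μ)) (sub_nonneg.2 h1),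
    mul_nonneg (mul_nonneg (by linarith : (0:ℝ) ≤ 1-l) (mul_nonneg h3 hα.le)) (sub_nonneg.2 h2),
    mul_nonneg (mul_nonneg (mul_nonneg hl0.le (by linarith : (0:ℝ) ≤ 1-l)) hX.le)
      (by linarith : (0:ℝ) ≤ X - ((1-μ)+μ*α))]


lemma key_le (α X l μ a b : ℝ) (hα : 0 < α) (hX : 0 < X) (hl0 : 0 < l) (hl1 : l < 1)
    (h1 : 1 - μ ≤ (1 - l) * X) (h2 : μ * α ≤ l * X) (h3 : 0 ≤ μ) (h4 : μ ≤ 1) :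
    ((1-μ)*a + μ*b)^2 / X^2 ≤ (1-l)*a^2 + l*(b^2/α^2) := by
  have hl1' : (0:ℝ) < 1 - l := by linarith
  have hM := hMlem α X l μ hα hX hl0 hl1 h1 h2 h3 h4
  have hT : (0:ℝ) ≤ (1-l)*a^2*α^2 + l*b^2 := by positivity
  have key' : l*(1-l)*(α^2*((1-μ)*a+μ*b)^2) ≤ l*(1-l)*(X^2*((1-l)*a^2*α^2 + l*b^2)) := by
    nlinarith [sq_nonneg ((1-μ)*l*b - μ*α^2*(1-l)*a), mul_nonneg (sub_nonneg.2 hM) hT]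
  have key : α^2*((1-μ)*a+μ*b)^2 ≤ X^2*((1-l)*a^2*α^2 + l*b^2) :=
    (mul_le_mul_iff_right₀ (mul_pos hl0 hl1')).mp key'
  have hα2 : (0:ℝ) < α^2 := by positivity
  have hX2 : (0:ℝ) < X^2 := by positivity
  have e : (1-l)*a^2 + l*(b^2/α^2) = ((1-l)*a^2*α^2 + l*b^2)/α^2 := by field_simp
  rw [e, div_le_div_iff₀ hX2 hα2]
  nlinarith [key]

lemma key_eq (α X l μ a b : ℝ) (hα : 0 < α) (hX : 0 < X) (hl0 : 0 < l) (hl1 : l < 1)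
    (h1 : 1 - μ ≤ (1 - l) * X) (h2 : μ * α ≤ l * X) (h3 : 0 ≤ μ) (h4 : μ ≤ 1)
    (hAM : α = X*((1-l)*α + l) → α = 1)
    (hEq : α^2*((1-μ)*a+μ*b)^2 = X^2*((1-l)*a^2*α^2 + l*b^2)) : a = b := by
  have hl1' : (0:ℝ) < 1 - l := by linarith
  have hM := hMlem α X l μ hα hX hl0 hl1 h1 h2 h3 h4
  have hT : (0:ℝ) ≤ (1-l)*a^2*α^2 + l*b^2 := by positivity
  have hZ : 0 ≤ (l*(1-l)*X^2 - ((1-μ)^2*l + (μ*α)^2*(1-l))) * ((1-l)*a^2*α^2 + l*b^2) :=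
    mul_nonneg (by linarith) hT
  have hRnn : (0:ℝ) ≤ ((1-μ)*l*b - μ*α^2*(1-l)*a)^2 := sq_nonneg _
  have hsum0 : (l*(1-l)*X^2 - ((1-μ)^2*l + (μ*α)^2*(1-l))) * ((1-l)*a^2*α^2 + l*b^2)
      + ((1-μ)*l*b - μ*α^2*(1-l)*a)^2 = 0 := by linear_combination (-(l*(1-l))) * hEq
  have hZ0 : (l*(1-l)*X^2 - ((1-μ)^2*l + (μ*α)^2*(1-l))) * ((1-l)*a^2*α^2 + l*b^2) = 0 := by
    linarith
  have hR0 : (1-μ)*l*b - μ*α^2*(1-l)*a = 0 := by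
    have : ((1-μ)*l*b - μ*α^2*(1-l)*a)^2 = 0 := by linarith
    exact sq_eq_zero_iff.mp this
  rcases mul_eq_zero.mp hZ0 with hcase | hcase
  · -- M = l(1-l)X²
    have hP1 : (0:ℝ) ≤ l*(1-μ)*((1-l)*X-(1-μ)) :=
      mul_nonneg (mul_nonneg hl0.le (by linarith)) (by linarith)
    have hP2 : (0:ℝ) ≤ (1-l)*(μ*α)*(l*X-μ*α) :=
      mul_nonneg (mul_nonneg hl1'.le (mul_nonneg h3 hα.le)) (by linarith)
    have hP3 : (0:ℝ) ≤ l*(1-l)*X*(X-((1-μ)+μ*α)) :=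
      mul_nonneg (mul_nonneg (mul_nonneg hl0.le hl1'.le) hX.le) (by linarith)
    have hid : l*(1-μ)*((1-l)*X-(1-μ)) + (1-l)*(μ*α)*(l*X-μ*α) + l*(1-l)*X*(X-((1-μ)+μ*α))
        = l*(1-l)*X^2 - ((1-μ)^2*l + (μ*α)^2*(1-l)) := by ring
    have hP3' : l*(1-l)*X*(X-((1-μ)+μ*α)) = 0 := by linarith
    have hstX : X = (1-μ)+μ*α := by
      have := (mul_eq_zero.mp hP3').resolve_left (mul_pos (mul_pos hl0 hl1') hX).ne'
      linarith
    have hP1' : l*(1-μ)*((1-l)*X-(1-μ)) = 0 := by linarith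
    rcases mul_eq_zero.mp hP1' with h5 | h5
    · rcases mul_eq_zero.mp h5 with h6 | h6
      · exact absurd h6 hl0.ne'
      · -- μ = 1, X = α, h2 : α ≤ l*α, contradiction
        have hμ1 : μ = 1 := by linarith
        exfalso; nlinarith [mul_pos hl1' hα]
    · -- 1-μ = (1-l)X
      have hs : 1 - μ = (1-l)*X := by linarith
      have hμα : μ*α = l*X := by linarith
      have hα1 : α = 1 := hAM (by linear_combination α*hs + hμα)
      have hX1 : X = 1 := by rw [hα1] at hstX; linarith
      have hμl : μ = l := by rw [hα1, hX1] at hμα; linarith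
      rw [hα1] at hR0
      have h9 : l*(1-l)*(b-a) = 0 := by linear_combination hR0 + (l*b + (1-l)*a)*hμl
      have := (mul_eq_zero.mp h9).resolve_left (mul_pos hl0 hl1').ne'
      linarith
  · -- T2 = 0
    have hB : (0:ℝ) ≤ l*b^2 := by positivity
    have hA : (0:ℝ) ≤ (1-l)*a^2*α^2 := by positivity
    have ha0 : ((1-l)*α^2) * a^2 = 0 := by linarith
    have hb0 : l * b^2 = 0 := by linarith
    have ha' : a = 0 :=
      sq_eq_zero_iff.mp ((mul_eq_zero.mp ha0).resolve_left (mul_pos hl1' (pow_pos hα 2)).ne')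
    have hb' : b = 0 :=
      sq_eq_zero_iff.mp ((mul_eq_zero.mp hb0).resolve_left hl0.ne')
    rw [ha', hb']

theorem stmt_11 {n : ℕ} (v : Fin n → EuclideanSpace ℝ (Fin n))
    (hv : Orthonormal ℝ v) (hv' : Submodule.span ℝ (Set.range v) = ⊤)
    (d₀ d₁ : EuclideanSpace ℝ (Fin n))
    (α : Fin n → ℝ) (hα : ∀ i, 0 < α i) (l : ℝ) (hl : l ∈ Set.Ioo (0:ℝ) 1)
    (μ : Fin n → ℝ) (hμ : ∀ i, μ i ∈ Set.Icc (0:ℝ) 1)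
    (hμ1 : ∀ i, 1 - (1 - l) * (α i) ^ l ≤ μ i) (hμ2 : ∀ i, μ i ≤ l * (α i) ^ (l - 1))
    (dl : EuclideanSpace ℝ (Fin n))
    (hdl : dl = ∑ i, ((1 - μ i) * ⟪d₀, v i⟫ + μ i * ⟪d₁, v i⟫) • v i)
    (hne : ((meanEllipsoid v α 0 + ({d₀} : Set (EuclideanSpace ℝ (Fin n)))) ∩
        (meanEllipsoid v α 1 + ({d₁} : Set (EuclideanSpace ℝ (Fin n)))) ∩
        frontier (meanEllipsoid v α l + ({dl} : Set (EuclideanSpace ℝ (Fin n))))).Nonempty) :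
    d₀ = d₁ := by
  obtain ⟨hl0, hl1⟩ := hl
  obtain ⟨x, ⟨hx0, hx1⟩, hxf⟩ := hne
  have hmem : ∀ (A : Set (EuclideanSpace ℝ (Fin n))) (d y : EuclideanSpace ℝ (Fin n)),
      y ∈ A + ({d} : Set (EuclideanSpace ℝ (Fin n))) ↔ y - d ∈ A := by
    intro A d y
    simp only [Set.add_singleton, Set.mem_image]
    constructor
    · rintro ⟨z, hz, rfl⟩; simpa using hz
    · intro h; exact ⟨y - d, h, sub_add_cancel y d⟩
  set a : Fin n → ℝ := fun i => ⟪x - d₀, v i⟫ with ha_def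
  set b : Fin n → ℝ := fun i => ⟪x - d₁, v i⟫ with hb_def
  -- ∑ a² ≤ 1
  have ha : ∑ i, a i ^ 2 ≤ 1 := by
    have h := (hmem _ _ _).mp hx0
    simp only [meanEllipsoid, Set.mem_setOf_eq, mul_zero, Real.rpow_zero, div_one] at h
    exact h
  -- ∑ b²/α² ≤ 1
  have hb : ∑ i, b i ^ 2 / α i ^ 2 ≤ 1 := by
    have h := (hmem _ _ _).mp hx1
    simp only [meanEllipsoid, Set.mem_setOf_eq, mul_one, Real.rpow_two] at h
    exact h
  -- frontier: ∑ c²/α^(2l) = 1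
  have hcont : Continuous fun y : EuclideanSpace ℝ (Fin n) =>
      ∑ i, ⟪y - dl, v i⟫ ^ 2 / (α i) ^ (2 * l) := by
    apply continuous_finset_sum
    intro i _
    exact (((continuous_id.sub continuous_const).inner continuous_const).pow 2).div_const _
  have hsetS : meanEllipsoid v α l + ({dl} : Set (EuclideanSpace ℝ (Fin n)))
      = {y | (∑ i, ⟪y - dl, v i⟫ ^ 2 / (α i) ^ (2 * l)) ≤ 1} := by
    ext y
    rw [hmem]
    simp only [meanEllipsoid, Set.mem_setOf_eq]
  have hc : ∑ i, ⟪x - dl, v i⟫ ^ 2 / (α i) ^ (2 * l) = 1 := by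
    rw [hsetS] at hxf
    have hcl : IsClosed {y : EuclideanSpace ℝ (Fin n) |
        (∑ i, ⟪y - dl, v i⟫ ^ 2 / (α i) ^ (2 * l)) ≤ 1} := isClosed_le hcont continuous_const
    have hle : (∑ i, ⟪x - dl, v i⟫ ^ 2 / (α i) ^ (2 * l)) ≤ 1 :=
      hcl.frontier_subset hxf
    have hnlt : ¬ (∑ i, ⟪x - dl, v i⟫ ^ 2 / (α i) ^ (2 * l)) < 1 := by
      intro hlt
      have hop : IsOpen {y : EuclideanSpace ℝ (Fin n) |
          (∑ i, ⟪y - dl, v i⟫ ^ 2 / (α i) ^ (2 * l)) < 1} := isOpen_lt hcont continuous_const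
      have hsub : {y : EuclideanSpace ℝ (Fin n) |
          (∑ i, ⟪y - dl, v i⟫ ^ 2 / (α i) ^ (2 * l)) < 1} ⊆ {y | (∑ i, ⟪y - dl, v i⟫ ^ 2 / (α i) ^ (2 * l)) ≤ 1} :=
        Set.setOf_subset_setOf.mpr (fun y => le_of_lt)
      have hint : x ∈ interior {y : EuclideanSpace ℝ (Fin n) |
          (∑ i, ⟪y - dl, v i⟫ ^ 2 / (α i) ^ (2 * l)) ≤ 1} :=
        interior_maximal hsub hop hlt
      exact hxf.2 hint
    linarith
  -- coordinates of x - dl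
  have hvij := orthonormal_iff_ite.mp hv
  have hcoord : ∀ i, ⟪x - dl, v i⟫ = (1 - μ i) * a i + μ i * b i := by
    intro i
    have hdli : ⟪dl, v i⟫ = (1 - μ i) * ⟪d₀, v i⟫ + μ i * ⟪d₁, v i⟫ := by
      rw [hdl, sum_inner]
      simp only [real_inner_smul_left, hvij]
      simp [Finset.sum_ite_eq', mul_ite, mul_one, mul_zero]
    rw [inner_sub_left, hdli, ha_def, hb_def]
    simp only [inner_sub_left]
    ring
  set X : Fin n → ℝ := fun i => (α i) ^ l with hX_def
  have hX : ∀ i, 0 < X i := fun i => Real.rpow_pos_of_pos (hα i) l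
  have hXsq : ∀ i, (α i) ^ (2 * l) = X i ^ 2 := by
    intro i
    rw [show (2 * l) = l + l by ring, Real.rpow_add (hα i), sq]
  have h1 : ∀ i, 1 - μ i ≤ (1 - l) * X i := fun i => by linarith [hμ1 i]
  have h2 : ∀ i, μ i * α i ≤ l * X i := by
    intro i
    have e : (α i) ^ (l - 1) * α i = X i := by
      rw [hX_def]
      rw [← Real.rpow_add_one (hα i).ne' (l - 1)]
      norm_num
    calc μ i * α i ≤ l * (α i) ^ (l - 1) * α i := by
          have := mul_le_mul_of_nonneg_right (hμ2 i) (hα i).le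
          linarith
      _ = l * X i := by rw [mul_assoc, e]
  have hAMeq : ∀ i, α i = X i * ((1 - l) * α i + l) → α i = 1 := by
    intro i hEq
    by_contra hne1
    have hlogne : Real.log (α i) ≠ 0 := by
      intro h0
      rcases Real.log_eq_zero.mp h0 with h | h | h
      · exact (hα i).ne' h
      · exact hne1 h
      · linarith [hα i]
    have hconv := strictConvexOn_exp.2 (Set.mem_univ (Real.log (α i))) (Set.mem_univ (0:ℝ))
      hlogne (by linarith : (0:ℝ) < 1 - l) hl0 (by ring)
    simp only [smul_eq_mul, mul_zero, add_zero, Real.exp_zero, mul_one, Real.exp_log (hα i)] at hconv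
    -- hconv : exp ((1-l) * log (α i)) < (1-l) * α i + l
    have e1 : Real.exp ((1 - l) * Real.log (α i)) = (α i) ^ ((1:ℝ) - l) := by
      rw [Real.rpow_def_of_pos (hα i)]; ring_nf
    have e2 : (α i) ^ ((1:ℝ) - l) * X i = α i := by
      rw [hX_def, ← Real.rpow_add (hα i)]
      norm_num
    have : α i < α i := by
      calc α i = (α i) ^ ((1:ℝ) - l) * X i := e2.symm
        _ < ((1 - l) * α i + l) * X i := by
            rw [← e1]
            exact mul_lt_mul_of_pos_right hconv (hX i)
        _ = α i := by rw [mul_comm]; exact hEq.symm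
    exact lt_irrefl _ this
  -- per-i inequality
  have hle : ∀ i ∈ Finset.univ, ⟪x - dl, v i⟫ ^ 2 / (α i) ^ (2 * l)
      ≤ (1 - l) * a i ^ 2 + l * (b i ^ 2 / α i ^ 2) := by
    intro i _
    rw [hcoord i, hXsq i]
    exact key_le (α i) (X i) l (μ i) (a i) (b i) (hα i) (hX i) hl0 hl1
      (h1 i) (h2 i) (hμ i).1 (hμ i).2
  -- sums are equal
  have hsum : ∑ i, ⟪x - dl, v i⟫ ^ 2 / (α i) ^ (2 * l)
      = ∑ i, ((1 - l) * a i ^ 2 + l * (b i ^ 2 / α i ^ 2)) := by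
    have hS1 := Finset.sum_le_sum hle
    have hS2 : ∑ i, ((1 - l) * a i ^ 2 + l * (b i ^ 2 / α i ^ 2)) ≤ 1 := by
      rw [Finset.sum_add_distrib, ← Finset.mul_sum, ← Finset.mul_sum]
      have t1 := mul_le_mul_of_nonneg_left ha (by linarith : (0:ℝ) ≤ 1 - l)
      have t2 := mul_le_mul_of_nonneg_left hb hl0.le
      linarith
    linarith
  have heach := (Finset.sum_eq_sum_iff_of_le hle).mp hsum
  -- coordinates equal
  have hab : ∀ i, a i = b i := by
    intro i
    have he := heach i (Finset.mem_univ i)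
    rw [hcoord i, hXsq i] at he
    apply key_eq (α i) (X i) l (μ i) (a i) (b i) (hα i) (hX i) hl0 hl1
      (h1 i) (h2 i) (hμ i).1 (hμ i).2 (hAMeq i)
    have hα2 : (α i)^2 ≠ 0 := (pow_pos (hα i) 2).ne'
    have hX2 : (X i)^2 ≠ 0 := (pow_pos (hX i) 2).ne'
    field_simp at he ⊢
    have he2 : ((1 - μ i) * a i + μ i * b i) ^ 2 = (a i ^ 2 * (1 - l) + b i ^ 2 * l / α i ^ 2) * X i ^ 2 :=
      (div_eq_iff hX2).mp he
    have hcan : b i ^ 2 * l / α i ^ 2 * α i ^ 2 = b i ^ 2 * l := div_mul_cancel₀ _ hα2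
    linear_combination α i ^ 2 * he2 + X i ^ 2 * hcan
  -- conclude d₀ = d₁
  have hzero : ∀ i, ⟪d₁ - d₀, v i⟫ = 0 := by
    intro i
    have : (x - d₀) - (x - d₁) = d₁ - d₀ := by abel
    rw [← this, inner_sub_left]
    have := hab i
    rw [ha_def, hb_def] at this
    simp only [ha_def, hb_def] at this ⊢
    linarith
  let B : OrthonormalBasis (Fin n) ℝ (EuclideanSpace ℝ (Fin n)) := OrthonormalBasis.mk hv hv'.ge
  have hB : ∀ i, B i = v i := fun i => by simp [B, OrthonormalBasis.coe_mk]
  have : d₁ - d₀ = 0 := by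
    have hrepr := B.sum_repr' (d₁ - d₀)
    rw [← hrepr]
    apply Finset.sum_eq_zero
    intro i _
    rw [hB i, real_inner_comm, hzero i, zero_smul]
  have := sub_eq_zero.mp this
  exact this.symm
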